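/- For every t ∈ [0,1] one has σ_loc²(2+t, 0) ≥ 2; equivalently, e^{−(3+3t)/8}/√(3+3t) ≥ e^{−(5+t)/8}/√(5+t) holds for all t ∈ [0,1], i.e. at x = 0 the Gaussian weight attached to the high-variance branch (value 3) dominates the weight attached to the low-variance branch (value 1) on the third time interval. -/
import Mathlib


open Real Set

/-- The Dupire local variance `σ_loc²(2+t,x)` of the mixing model on the third time
interval `(2,3]`, written explicitly and extended continuously to `t ∈ [0,1]`. -/
noncomputable def sigloc2Third (t x : ℝ) : ℝ :=
  (Real.exp (-(2 * x + 5 + t) ^ 2 / (8 * (5 + t))) / Real.sqrt (5 + t)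
      + 3 * Real.exp (-(2 * x + 3 + 3 * t) ^ 2 / (8 * (3 + 3 * t))) / Real.sqrt (3 + 3 * t)) /
    (Real.exp (-(2 * x + 5 + t) ^ 2 / (8 * (5 + t))) / Real.sqrt (5 + t)
      + Real.exp (-(2 * x + 3 + 3 * t) ^ 2 / (8 * (3 + 3 * t))) / Real.sqrt (3 + 3 * t))

/-- For every `t ∈ [0,1]` one has `σ_loc²(2+t, 0) ≥ 2`; equivalently, at `x = 0` the
Gaussian weight attached to the high-variance branch dominates the one attached to the
low-variance branch: `e^{−(3+3t)/8}/√(3+3t) ≥ e^{−(5+t)/8}/√(5+t)`. -/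
theorem sigloc2Third_ge_two_at_zero :
    ∀ t ∈ Set.Icc (0 : ℝ) 1,
      2 ≤ sigloc2Third t 0 ∧
      Real.exp (-(5 + t) / 8) / Real.sqrt (5 + t)
        ≤ Real.exp (-(3 + 3 * t) / 8) / Real.sqrt (3 + 3 * t) := by
  intro t ht
  obtain ⟨h0, h1⟩ := ht
  have h5 : (0:ℝ) < 5 + t := by linarith
  have h3 : (0:ℝ) < 3 + 3 * t := by linarith
  have key : Real.exp (-(5 + t) / 8) / Real.sqrt (5 + t)
      ≤ Real.exp (-(3 + 3 * t) / 8) / Real.sqrt (3 + 3 * t) := by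
    apply div_le_div₀ (Real.exp_pos _).le
    · exact Real.exp_le_exp.mpr (by linarith)
    · exact Real.sqrt_pos.mpr h3
    · exact Real.sqrt_le_sqrt (by linarith)
  refine ⟨?_, key⟩
  unfold sigloc2Third
  have e1 : -(2 * 0 + 5 + t) ^ 2 / (8 * (5 + t)) = -(5 + t) / 8 := by
    field_simp
    ring
  have e2 : -(2 * 0 + 3 + 3 * t) ^ 2 / (8 * (3 + 3 * t)) = -(3 + 3 * t) / 8 := by
    field_simp
    ring
  rw [e1, e2]
  set B := Real.exp (-(5 + t) / 8) / Real.sqrt (5 + t) with hB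
  set A := Real.exp (-(3 + 3 * t) / 8) / Real.sqrt (3 + 3 * t) with hA
  have hApos : 0 < A := div_pos (Real.exp_pos _) (Real.sqrt_pos.mpr h3)
  have hBpos : 0 < B := div_pos (Real.exp_pos _) (Real.sqrt_pos.mpr h5)
  have h3A : 3 * Real.exp (-(3 + 3 * t) / 8) / Real.sqrt (3 + 3 * t) = 3 * A := by
    rw [hA]; ring
  rw [h3A, le_div_iff₀ (by linarith)]
  linarith
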